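/- Let g : D → ℝ be convex and differentiable on an open convex set D ⊆ Ξ, and let L = {η ∈ Ξ : ξ + λη ∈ D and g(ξ + λη) = g(ξ) for all ξ ∈ D, λ ∈ ℝ} be the set of directions of translation invariance. Then L ⊆ (∇g(D))^⊥. Conversely, if g is real analytic on D and unbounded-gradient on finite boundary points (|∇g(ξ)| → ∞ as ξ → ξ₀ ∈ ∂D), then every η ∈ (∇g(D))^⊥ satisfies ξ + ℝη ⊆ D and g is constant along ξ + ℝη; hence L = (∇g(D))^⊥. -/

import Mathlib

open scoped RealInnerProductSpace
open Filter Topology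

private lemma deriv_along {Ξ : Type*} [NormedAddCommGroup Ξ] [InnerProductSpace ℝ Ξ]
    [CompleteSpace Ξ] {g : Ξ → ℝ} {p : Ξ} (v : Ξ) (t : ℝ)
    (hdx : DifferentiableAt ℝ g (p + t • v)) :
    HasDerivAt (fun s : ℝ => g (p + s • v)) ⟪gradient g (p + t • v), v⟫ t := by
  have hc : HasDerivAt (fun s : ℝ => p + s • v) v t := by
    simpa using ((hasDerivAt_id t).smul_const v).const_add p
  have hg := hdx.hasGradientAt.hasFDerivAt
  have := hg.comp_hasDerivAt t hc
  simpa [InnerProductSpace.toDual_apply_apply, Function.comp_def] using this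

private lemma subgrad {Ξ : Type*} [NormedAddCommGroup Ξ] [InnerProductSpace ℝ Ξ]
    [CompleteSpace Ξ] {D : Set Ξ} {g : Ξ → ℝ} (hconv : ConvexOn ℝ D g)
    {x y : Ξ} (hx : x ∈ D) (hy : y ∈ D) (hdx : DifferentiableAt ℝ g x) :
    g x + ⟪gradient g x, y - x⟫ ≤ g y := by
  have hψ : HasDerivAt (fun s : ℝ => g (x + s • (y - x))) ⟪gradient g x, y - x⟫ 0 := by
    have := deriv_along (g := g) (p := x) (y - x) 0 (by simpa using hdx)
    simpa using this
  have hslope := hasDerivAt_iff_tendsto_slope.mp hψ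
  have h1 : Tendsto (slope (fun s : ℝ => g (x + s • (y - x))) 0) (𝓝[>] 0)
      (𝓝 ⟪gradient g x, y - x⟫) :=
    hslope.mono_left (nhdsWithin_mono _ (fun t ht => ne_of_gt ht))
  have h2 : ∀ᶠ t in 𝓝[>] (0:ℝ),
      slope (fun s : ℝ => g (x + s • (y - x))) 0 t ≤ g y - g x := by
    filter_upwards [Ioo_mem_nhdsGT_of_mem (Set.mem_Ico.mpr ⟨le_refl 0, one_pos⟩)] with t ht
    have hc := hconv.2 hx hy (show (0:ℝ) ≤ 1 - t by linarith [ht.2]) (le_of_lt ht.1)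
      (show (1 - t) + t = 1 by ring)
    have hpt : (1 - t) • x + t • y = x + t • (y - x) := by
      rw [smul_sub, sub_smul, one_smul]; abel
    rw [hpt] at hc
    rw [slope_def_field]
    rw [div_le_iff₀ (by simpa using ht.1)]
    simp only [zero_smul, add_zero, sub_zero, smul_eq_mul] at hc ⊢
    nlinarith
  have := le_of_tendsto h1 h2
  linarith

/-- The lineality space of invariance directions of a convex differentiable function `g` on
an open convex set `D` equals the orthogonal complement of `∇g(D)`, provided `g` is real
analytic on `D` and its gradient blows up at every finite boundary point of `D`. -/
theorem lineality_eq_gradient_perp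
    {Ξ : Type*} [NormedAddCommGroup Ξ] [InnerProductSpace ℝ Ξ] [FiniteDimensional ℝ Ξ]
    (D : Set Ξ) (hD : IsOpen D) (hDc : Convex ℝ D) (hDne : D.Nonempty)
    (g : Ξ → ℝ) (hdiff : DifferentiableOn ℝ g D) (hconv : ConvexOn ℝ D g)
    (hanal : AnalyticOn ℝ g D)
    (hblow : ∀ ξ₀ ∈ frontier D, Filter.Tendsto (fun ξ => ‖gradient g ξ‖)
      (nhdsWithin ξ₀ D) Filter.atTop) :
    {η : Ξ | ∀ ξ ∈ D, ∀ l : ℝ, ξ + l • η ∈ D ∧ g (ξ + l • η) = g ξ}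
      = {η : Ξ | ∀ ξ ∈ D, ⟪η, gradient g ξ⟫ = 0} := by
  have : CompleteSpace Ξ := FiniteDimensional.complete ℝ Ξ
  ext η
  simp only [Set.mem_setOf_eq]
  constructor
  · -- invariance direction ⟹ orthogonal to all gradients
    intro h ξ hξ
    have hdx : DifferentiableAt ℝ g ξ := hdiff.differentiableAt (hD.mem_nhds hξ)
    have hψ : HasDerivAt (fun s : ℝ => g (ξ + s • η)) ⟪gradient g ξ, η⟫ 0 := by
      have := deriv_along (g := g) (p := ξ) η 0 (by simpa using hdx)
      simpa using this
    have hconst : (fun s : ℝ => g (ξ + s • η)) = fun _ => g ξ :=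
      funext fun s => (h ξ hξ s).2
    rw [hconst] at hψ
    have h0 := hψ.deriv
    rw [deriv_const] at h0
    rw [real_inner_comm]
    exact h0.symm
  · -- orthogonal to all gradients ⟹ invariance direction
    intro h ξ hξ l
    set I : Set ℝ := {t : ℝ | ξ + t • η ∈ D} with hIdef
    have hI0 : (0:ℝ) ∈ I := by simp [hIdef, hξ]
    have hcont : Continuous fun t : ℝ => ξ + t • η :=
      continuous_const.add (continuous_id.smul continuous_const)
    have hIopen : IsOpen I := hD.preimage hcont
    -- derivative of g along the line is zero on I
    have hφdiff : ∀ t ∈ I, HasDerivAt (fun s : ℝ => g (ξ + s • η)) 0 t := by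
      intro t ht
      have hdx : DifferentiableAt ℝ g (ξ + t • η) := hdiff.differentiableAt (hD.mem_nhds ht)
      have hd := deriv_along (g := g) (p := ξ) η t hdx
      rwa [real_inner_comm, h _ ht] at hd
    have hIconv : Convex ℝ I := by
      intro a ha b hb s t hs ht hst
      have hmem := hDc ha hb hs ht hst
      have hcomb : s • (ξ + a • η) + t • (ξ + b • η) = (s + t) • ξ + (s * a + t * b) • η := by
        simp only [smul_add, smul_smul, add_smul]; abel
      rw [hcomb, hst, one_smul] at hmem
      exact hmem
    -- g is constant on I
    have hconstI : ∀ t ∈ I, g (ξ + t • η) = g ξ := by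
      intro t ht
      have hc := hIconv.is_const_of_fderivWithin_eq_zero
        (f := fun s : ℝ => g (ξ + s • η))
        (fun s hs => ((hφdiff s hs).differentiableAt).differentiableWithinAt)
        (fun s hs => by
          rw [fderivWithin_of_isOpen hIopen hs, (hφdiff s hs).hasFDerivAt.fderiv]
          ext u; simp) ht hI0
      simpa using hc
    -- gradient is bounded along the line
    obtain ⟨ε, hε, hball⟩ := Metric.isOpen_iff.mp hD ξ hξ
    have hrpos : 0 < ε / 2 := by linarith
    have hcb : Metric.closedBall ξ (ε / 2) ⊆ D :=
      subset_trans (Metric.closedBall_subset_ball (by linarith)) hball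
    obtain ⟨z, hz, hzmax⟩ := (isCompact_closedBall ξ (ε / 2)).exists_isMaxOn
      ⟨ξ, Metric.mem_closedBall_self hrpos.le⟩ (hdiff.continuousOn.mono hcb)
    have hzmax := isMaxOn_iff.mp hzmax
    set M := g z with hM
    have hMge : g ξ ≤ M := hzmax ξ (Metric.mem_closedBall_self hrpos.le)
    have hbound : ∀ t ∈ I, ‖gradient g (ξ + t • η)‖ ≤ (M - g ξ) / (ε / 2) := by
      intro t ht
      set v := gradient g (ξ + t • η) with hv
      by_cases hv0 : v = 0
      · rw [hv0, norm_zero]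
        exact div_nonneg (by linarith) hrpos.le
      · have hvn : (0:ℝ) < ‖v‖ := norm_pos_iff.mpr hv0
        set y := ξ + (ε / 2 / ‖v‖) • v with hy
        have hymem : y ∈ Metric.closedBall ξ (ε / 2) := by
          rw [Metric.mem_closedBall, dist_eq_norm, hy]
          simp only [add_sub_cancel_left, norm_smul, Real.norm_eq_abs,
            abs_of_nonneg (div_nonneg hrpos.le hvn.le)]
          rw [div_mul_cancel₀ _ hvn.ne']
        have hdx : DifferentiableAt ℝ g (ξ + t • η) := hdiff.differentiableAt (hD.mem_nhds ht)
        have hsub := subgrad hconv ht (hcb hymem) hdx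
        have hyx : y - (ξ + t • η) = (ε / 2 / ‖v‖) • v - t • η := by
          rw [hy]; abel
        have hinner : ⟪v, y - (ξ + t • η)⟫ = (ε / 2) * ‖v‖ := by
          rw [hyx, inner_sub_right, real_inner_smul_right, real_inner_smul_right,
            real_inner_self_eq_norm_sq, real_inner_comm, h _ ht]
          field_simp
          ring
        rw [hinner, hconstI t ht] at hsub
        have hgy : g y ≤ M := hzmax y hymem
        rw [le_div_iff₀ hrpos]
        nlinarith
    -- I is closed
    have hIclosed : IsClosed I := by
      rw [← closure_subset_iff_isClosed]
      intro t htcl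
      by_contra htI
      have hclD : ξ + t • η ∈ closure D := hcont.closure_preimage_subset D htcl
      have hfr : ξ + t • η ∈ frontier D := by
        rw [hD.frontier_eq]; exact ⟨hclD, htI⟩
      have hb := hblow _ hfr
      have hct : Tendsto (fun s : ℝ => ξ + s • η) (nhdsWithin t I) (nhdsWithin (ξ + t • η) D) := by
        apply tendsto_nhdsWithin_of_tendsto_nhds_of_eventually_within
        · exact (hcont.tendsto t).mono_left nhdsWithin_le_nhds
        · exact eventually_nhdsWithin_of_forall (fun s hs => hs)
      have hnb : (nhdsWithin t I).NeBot := mem_closure_iff_nhdsWithin_neBot.mp htcl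
      have hten := hb.comp hct
      have hev : ∀ᶠ s in nhdsWithin t I,
          ‖gradient g (ξ + s • η)‖ ≤ (M - g ξ) / (ε / 2) :=
        eventually_nhdsWithin_of_forall hbound
      obtain ⟨s, hs1, hs2⟩ :=
        ((hten.eventually (eventually_gt_atTop ((M - g ξ) / (ε / 2)))).and hev).exists
      exact absurd hs2 (not_le.mpr hs1)
    have hIuniv : I = Set.univ := by
      rcases isClopen_iff.mp ⟨hIclosed, hIopen⟩ with he | hu
      · exact absurd (he ▸ hI0) (Set.notMem_empty 0)
      · exact hu
    have hl : l ∈ I := hIuniv.symm ▸ Set.mem_univ l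
    exact ⟨hl, hconstI l hl⟩
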